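/- Let B be a unital commutative ℝ-algebra and K ⊂ B a convex cone with: K − K = B; K·K ⊂ K; K is spanned by a countable set; and for all a ∈ B there exists ε > 0 with 1 − εa ∈ K. Let L be the convex set of linear forms φ : B → ℝ that are nonnegative on K and satisfy φ(1) = 1. Then φ is an extreme point of L if and only if φ is multiplicative, i.e., φ(ab) = φ(a)φ(b) for all a,b ∈ B. -/

import Mathlib

open Polynomial in
theorem VK.quad_mem {B : Type*} [CommRing B] [Algebra ℝ B] (K : Set B)
    (hKsmul : ∀ c : ℝ, 0 ≤ c → ∀ x ∈ K, c • x ∈ K)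
    (hKadd : ∀ x ∈ K, ∀ y ∈ K, x + y ∈ K)
    (hKmul : ∀ x ∈ K, ∀ y ∈ K, x * y ∈ K)
    (hone : (1 : B) ∈ K)
    (v : B) (hv : v ∈ K) (hv1 : 1 - v ∈ K) (n : ℕ) (hn : 2 ≤ n) (μ : ℝ) :
    v ^ 2 - (2 * μ) • v + (μ ^ 2 + 1 / (4 * ((n : ℝ) - 1))) • (1 : B) ∈ K := by
  have hzero : (0 : B) ∈ K := by simpa using hKsmul 0 le_rfl 1 hone
  have hpow : ∀ x ∈ K, ∀ m : ℕ, x ^ m ∈ K := by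
    intro x hx m
    induction m with
    | zero => simpa using hone
    | succ k ih => rw [pow_succ]; exact hKmul _ ih _ hx
  set η : ℝ := 1 / (4 * ((n : ℝ) - 1)) with hη
  set b : ℕ → B := fun k => (Polynomial.aeval v) (bernsteinPolynomial ℝ n k) with hb
  set c : ℕ → ℝ := fun k =>
    (k : ℝ) * ((k : ℝ) - 1) / ((n : ℝ) * ((n : ℝ) - 1)) - 2 * μ * (k : ℝ) / (n : ℝ)
      + μ ^ 2 + η with hc
  have hn1 : (1 : ℝ) ≤ (n : ℝ) - 1 := by
    have : (2 : ℝ) ≤ (n : ℝ) := by exact_mod_cast hn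
    linarith
  have hnpos : (0 : ℝ) < (n : ℝ) := by linarith
  -- membership of the Bernstein elements
  have hbK : ∀ k, b k ∈ K := by
    intro k
    have : b k = ((n.choose k : ℝ)) • (v ^ k * (1 - v) ^ (n - k)) := by
      simp only [hb, bernsteinPolynomial, map_mul, map_pow, map_sub, map_one,
        Polynomial.aeval_X, Polynomial.aeval_natCast]
      rw [← nsmul_eq_mul, ← Nat.cast_smul_eq_nsmul ℝ, smul_mul_assoc]
    rw [this]
    exact hKsmul _ (by positivity) _ (hKmul _ (hpow _ hv _) _ (hpow _ hv1 _))
  -- nonnegativity of the coefficients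
  have hcnn : ∀ k ∈ Finset.range (n + 1), 0 ≤ c k := by
    intro k hk
    rw [Finset.mem_range, Nat.lt_succ_iff] at hk
    have hk' : (k : ℝ) ≤ (n : ℝ) := by exact_mod_cast hk
    have h1 : (0 : ℝ) < (n : ℝ) - 1 := by linarith
    have key : c k = ((k : ℝ) / n - μ) ^ 2 + (k : ℝ) * ((k : ℝ) - (n : ℝ)) / ((n : ℝ) ^ 2 * ((n : ℝ) - 1)) + η := by
      simp only [hc]
      field_simp
      ring
    rw [key, hη]
    have hk0 : (0 : ℝ) ≤ (k : ℝ) := Nat.cast_nonneg k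
    have hineq : (k : ℝ) * ((n : ℝ) - (k : ℝ)) ≤ (n : ℝ) ^ 2 / 4 := by nlinarith [sq_nonneg ((n : ℝ) - 2 * k)]
    have : -(1 / (4 * ((n : ℝ) - 1))) ≤ (k : ℝ) * ((k : ℝ) - (n : ℝ)) / ((n : ℝ) ^ 2 * ((n : ℝ) - 1)) := by
      rw [neg_le, ← neg_div, div_le_div_iff₀ (by positivity) (by positivity)]
      nlinarith
    nlinarith [sq_nonneg ((k : ℝ) / n - μ)]
  -- the sum identity
  have hsum : ∑ k ∈ Finset.range (n + 1), c k • b k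
      = v ^ 2 - (2 * μ) • v + (μ ^ 2 + η) • (1 : B) := by
    have h1 : ∑ k ∈ Finset.range (n + 1), b k = 1 := by
      simp only [hb, ← map_sum, bernsteinPolynomial.sum, map_one]
    have h2 : ∑ k ∈ Finset.range (n + 1), (k : ℝ) • b k = (n : ℝ) • v := by
      have := bernsteinPolynomial.sum_smul (R := ℝ) n
      have := congrArg (Polynomial.aeval v) this
      rw [map_sum, map_nsmul] at this
      simp only [map_nsmul, Polynomial.aeval_X] at this
      simpa only [Nat.cast_smul_eq_nsmul ℝ] using this
    have h3 : ∑ k ∈ Finset.range (n + 1), ((k : ℝ) * ((k : ℝ) - 1)) • b k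
        = ((n : ℝ) * ((n : ℝ) - 1)) • v ^ 2 := by
      have := bernsteinPolynomial.sum_mul_smul (R := ℝ) n
      have := congrArg (Polynomial.aeval v) this
      rw [map_sum, map_nsmul] at this
      simp only [map_nsmul, map_pow, Polynomial.aeval_X] at this
      have cast : ∀ m : ℕ, ((m : ℝ) * ((m : ℝ) - 1)) = ((m * (m - 1) : ℕ) : ℝ) := by
        intro m
        cases m with
        | zero => simp
        | succ j => push_cast [Nat.succ_sub_one]; ring
      calc ∑ k ∈ Finset.range (n + 1), ((k : ℝ) * ((k : ℝ) - 1)) • b k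
          = ∑ k ∈ Finset.range (n + 1), (k * (k - 1)) • b k := by
            refine Finset.sum_congr rfl fun k _ => ?_
            rw [cast k, Nat.cast_smul_eq_nsmul ℝ]
        _ = ((n : ℝ) * ((n : ℝ) - 1)) • v ^ 2 := by
            rw [this, cast n, Nat.cast_smul_eq_nsmul ℝ]
    have hnn1 : (n : ℝ) * ((n : ℝ) - 1) ≠ 0 := by positivity
    have expand : ∀ k : ℕ, c k • b k
        = (1 / ((n : ℝ) * ((n : ℝ) - 1))) • (((k : ℝ) * ((k : ℝ) - 1)) • b k)
          + (-(2 * μ / (n : ℝ))) • ((k : ℝ) • b k) + (μ ^ 2 + η) • b k := by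
      intro k
      rw [smul_smul, smul_smul, ← add_smul, ← add_smul]
      congr 1
      rw [hc]
      field_simp
      ring
    rw [Finset.sum_congr rfl fun k _ => expand k, Finset.sum_add_distrib,
      Finset.sum_add_distrib, ← Finset.smul_sum, ← Finset.smul_sum, ← Finset.smul_sum,
      h1, h2, h3, smul_smul, smul_smul]
    rw [one_div, inv_mul_cancel₀ hnn1, one_smul]
    have : -(2 * μ / (n : ℝ)) * (n : ℝ) = -(2 * μ) := by field_simp
    rw [this, neg_smul, ← sub_eq_add_neg]
  rw [← hsum]
  -- the sum is in K
  classical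
  refine Finset.sum_induction _ (· ∈ K) (fun x y hx hy => hKadd x hx y hy) hzero ?_
  intro k hk
  exact hKsmul _ (hcnn k hk) _ (hbK k)

theorem VK.dominated_eq {B : Type*} [CommRing B] [Algebra ℝ B] (K : Set B)
    (hKsmul : ∀ c : ℝ, 0 ≤ c → ∀ x ∈ K, c • x ∈ K)
    (hKadd : ∀ x ∈ K, ∀ y ∈ K, x + y ∈ K)
    (hKmul : ∀ x ∈ K, ∀ y ∈ K, x * y ∈ K)
    (hone : (1 : B) ∈ K)
    (hgen : ∀ b : B, ∃ x ∈ K, ∃ y ∈ K, b = x - y)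
    (harch : ∀ a : B, ∃ ε : ℝ, 0 < ε ∧ 1 - ε • a ∈ K)
    (φ ψ : B →ₗ[ℝ] ℝ)
    (hφ1 : φ 1 = 1)
    (hmul : ∀ a b : B, φ (a * b) = φ a * φ b)
    (hψK : ∀ x ∈ K, 0 ≤ ψ x) (hψ1 : ψ 1 = 1)
    (C : ℝ) (hC : 0 < C) (hdom : ∀ x ∈ K, ψ x ≤ C * φ x) : ψ = φ := by
  have key : ∀ v ∈ K, (1 : B) - v ∈ K → ψ v = φ v := by
    intro v hv hv1
    set lam : ℝ := φ v with hlam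
    set m : ℝ := ψ v with hm
    have hsq : φ (v ^ 2) = lam ^ 2 := by rw [pow_two, hmul, ← pow_two]
    have main : ∀ n : ℕ, 2 ≤ n → (m - lam) ^ 2 ≤ C * (1 / (4 * ((n : ℝ) - 1))) := by
      intro n hn
      have hn1 : (1 : ℝ) ≤ (n : ℝ) - 1 := by
        have : (2 : ℝ) ≤ (n : ℝ) := by exact_mod_cast hn
        linarith
      set η : ℝ := 1 / (4 * ((n : ℝ) - 1)) with hη
      have hηpos : 0 < η := by rw [hη]; positivity
      have hmem : ∀ μ : ℝ, v ^ 2 - (2 * μ) • v + (μ ^ 2 + η) • (1 : B) ∈ K :=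
        fun μ => VK.quad_mem K hKsmul hKadd hKmul hone v hv hv1 n hn μ
      have eφ : ∀ μ : ℝ, φ (v ^ 2 - (2 * μ) • v + (μ ^ 2 + η) • (1 : B))
          = (lam - μ) ^ 2 + η := by
        intro μ
        simp only [map_add, map_sub, map_smul, smul_eq_mul, hφ1, mul_one, hsq, ← hlam]
        ring
      have eψ : ∀ μ : ℝ, ψ (v ^ 2 - (2 * μ) • v + (μ ^ 2 + η) • (1 : B))
          = ψ (v ^ 2) - 2 * μ * m + μ ^ 2 + η := by
        intro μ
        simp only [map_add, map_sub, map_smul, smul_eq_mul, ← hm, hψ1, mul_one]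
        ring
      have h1 : 0 ≤ ψ (v ^ 2) - 2 * m * m + m ^ 2 + η := by
        rw [← eψ m]; exact hψK _ (hmem m)
      have h2 : ψ (v ^ 2) - 2 * lam * m + lam ^ 2 + η ≤ C * η := by
        have := hdom _ (hmem lam)
        rw [eψ lam, eφ lam] at this
        simpa using this
      nlinarith []
    by_contra hne
    have h0 : m - lam ≠ 0 := sub_ne_zero.mpr hne
    have ht : 0 < (m - lam) ^ 2 := by positivity
    obtain ⟨n, hn⟩ := exists_nat_gt (C / (4 * (m - lam) ^ 2) + 2)
    have hCpos : 0 < C / (4 * (m - lam) ^ 2) := by positivity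
    have hn2 : 2 ≤ n := by
      have : (2 : ℝ) ≤ (n : ℝ) := by linarith
      exact_mod_cast this
    have := main n hn2
    have hstep : C / (4 * (m - lam) ^ 2) < (n : ℝ) - 1 := by linarith
    rw [div_lt_iff₀ (by positivity)] at hstep
    have hlt : C * (1 / (4 * ((n : ℝ) - 1))) < (m - lam) ^ 2 := by
      rw [mul_one_div, div_lt_iff₀ (by linarith)]
      nlinarith
    linarith
  have keyK : ∀ u ∈ K, ψ u = φ u := by
    intro u hu
    obtain ⟨ε, hε, hεu⟩ := harch u
    have hv : ε • u ∈ K := hKsmul ε hε.le u hu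
    have h := key (ε • u) hv hεu
    rw [map_smul, map_smul, smul_eq_mul, smul_eq_mul] at h
    exact mul_left_cancel₀ hε.ne' h
  ext b
  obtain ⟨x, hx, y, hy, rfl⟩ := hgen b
  rw [map_sub, map_sub, keyK x hx, keyK y hy]


/-- **Ring Theorem of Kerov and Vershik.** Let `B` be a unital commutative
`ℝ`-algebra and `K ⊂ B` a convex cone with `K − K = B`, `K·K ⊂ K`, `K` spanned by a
countable set, and such that for every `a ∈ B` there is `ε > 0` with `1 − εa ∈ K`.
Then a linear form `φ` in the convex set `L` of linear forms nonnegative on `K` with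
`φ(1) = 1` is an extreme point of `L` if and only if it is multiplicative. -/
theorem ring_theorem_extreme_iff_multiplicative
    (B : Type*) [CommRing B] [Algebra ℝ B]
    (K : Set B)
    -- `K` is a convex cone
    (hKsmul : ∀ c : ℝ, 0 ≤ c → ∀ x ∈ K, c • x ∈ K)
    (hKadd : ∀ x ∈ K, ∀ y ∈ K, x + y ∈ K)
    -- `K − K = B`
    (hgen : ∀ b : B, ∃ x ∈ K, ∃ y ∈ K, b = x - y)
    -- `K · K ⊆ K`
    (hKmul : ∀ x ∈ K, ∀ y ∈ K, x * y ∈ K)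
    -- `K` is spanned by a countable set of elements
    (hcount : ∃ D : Set B, D.Countable ∧ D ⊆ K ∧
      ∀ x ∈ K, ∃ (s : Finset B) (c : B → ℝ), (↑s : Set B) ⊆ D ∧
        (∀ b, 0 ≤ c b) ∧ x = ∑ b ∈ s, c b • b)
    -- Archimedean-type condition
    (harch : ∀ a : B, ∃ ε : ℝ, 0 < ε ∧ 1 - ε • a ∈ K)
    (φ : B →ₗ[ℝ] ℝ)
    (hφ : φ ∈ {ψ : B →ₗ[ℝ] ℝ | (∀ x ∈ K, 0 ≤ ψ x) ∧ ψ 1 = 1}) :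
    φ ∈ Set.extremePoints ℝ {ψ : B →ₗ[ℝ] ℝ | (∀ x ∈ K, 0 ≤ ψ x) ∧ ψ 1 = 1} ↔
      ∀ a b : B, φ (a * b) = φ a * φ b := by
  obtain ⟨hφK, hφ1⟩ := hφ
  have hone : (1 : B) ∈ K := by simpa using (harch 0).choose_spec.2
  constructor
  · -- extreme → multiplicative
    rintro ⟨-, hext⟩
    -- the zero case
    have hzero : ∀ u ∈ K, φ u = 0 → ∀ b ∈ K, φ (u * b) = 0 := by
      intro u hu h0 b hb
      obtain ⟨δ, hδ, hδb⟩ := harch b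
      have h1 : 0 ≤ φ (u * b) := hφK _ (hKmul u hu b hb)
      have h2 : 0 ≤ φ (u * (1 - δ • b)) := hφK _ (hKmul _ hu _ hδb)
      have h3 : u * (1 - δ • b) = u - δ • (u * b) := by
        rw [mul_sub, mul_one, mul_smul_comm]
      rw [h3, map_sub, map_smul, smul_eq_mul, h0] at h2
      nlinarith
    have hmulK : ∀ u ∈ K, ∀ b ∈ K, φ (u * b) = φ u * φ b := by
      intro u hu b hb
      obtain ⟨ε, hε, hεu⟩ := harch u
      have hφu : 0 ≤ φ u := hφK u hu
      have hup : ε * φ u ≤ 1 := by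
        have := hφK _ hεu
        rw [map_sub, map_smul, smul_eq_mul, hφ1] at this
        linarith
      rcases eq_or_lt_of_le hφu with h0 | hpos
      · rw [hzero u hu h0.symm b hb, ← h0, zero_mul]
      · rcases eq_or_lt_of_le hup with h1 | hlt
        · -- ε φ u = 1
          have hv0 : φ (1 - ε • u) = 0 := by
            rw [map_sub, map_smul, smul_eq_mul, hφ1, h1, sub_self]
          have hz := hzero _ hεu hv0 b hb
          have hexp : (1 - ε • u) * b = b - ε • (u * b) := by
            rw [sub_mul, one_mul, smul_mul_assoc]
          rw [hexp, map_sub, map_smul, smul_eq_mul] at hz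
          have key : ε * φ (u * b) = ε * (φ u * φ b) := by
            linear_combination (-1 : ℝ) * hz - φ b * h1
          exact mul_left_cancel₀ hε.ne' key
        · -- main case
          set s : ℝ := ε * φ u with hs
          have hspos : 0 < s := by positivity
          set ψ₁ : B →ₗ[ℝ] ℝ := (φ u)⁻¹ • (φ ∘ₗ LinearMap.mulLeft ℝ u) with hψ₁
          set ψ₂ : B →ₗ[ℝ] ℝ :=
            (1 - s)⁻¹ • (φ ∘ₗ LinearMap.mulLeft ℝ (1 - ε • u)) with hψ₂
          have hψ₁app : ∀ x, ψ₁ x = (φ u)⁻¹ * φ (u * x) := by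
            intro x
            simp [hψ₁, LinearMap.mulLeft_apply]
          have hψ₂app : ∀ x, ψ₂ x = (1 - s)⁻¹ * φ ((1 - ε • u) * x) := by
            intro x
            simp [hψ₂, LinearMap.mulLeft_apply]
          have hψ₁mem : ψ₁ ∈ {ψ : B →ₗ[ℝ] ℝ | (∀ x ∈ K, 0 ≤ ψ x) ∧ ψ 1 = 1} := by
            constructor
            · intro x hx
              rw [hψ₁app]
              exact mul_nonneg (by positivity) (hφK _ (hKmul u hu x hx))
            · rw [hψ₁app, mul_one, inv_mul_cancel₀ hpos.ne']
          have hφv : φ (1 - ε • u) = 1 - s := by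
            rw [map_sub, map_smul, smul_eq_mul, hφ1, hs]
          have hψ₂mem : ψ₂ ∈ {ψ : B →ₗ[ℝ] ℝ | (∀ x ∈ K, 0 ≤ ψ x) ∧ ψ 1 = 1} := by
            constructor
            · intro x hx
              rw [hψ₂app]
              have := hφK _ (hKmul _ hεu x hx)
              have h1s : (0 : ℝ) ≤ (1 - s)⁻¹ := by
                have : (0 : ℝ) < 1 - s := by linarith
                positivity
              exact mul_nonneg h1s this
            · rw [hψ₂app, mul_one, hφv, inv_mul_cancel₀ (by linarith)]
          have hseg : φ ∈ openSegment ℝ ψ₁ ψ₂ := by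
            refine ⟨s, 1 - s, hspos, by linarith, by ring, ?_⟩
            ext x
            simp only [LinearMap.add_apply, LinearMap.smul_apply, smul_eq_mul,
              hψ₁app, hψ₂app]
            have hexp : (1 - ε • u) * x = x - ε • (u * x) := by
              rw [sub_mul, one_mul, smul_mul_assoc]
            rw [hexp, map_sub, map_smul, smul_eq_mul]
            have e1 : s * ((φ u)⁻¹ * φ (u * x)) = ε * φ (u * x) := by
              rw [hs]; field_simp
            have e2 : (1 - s) * ((1 - s)⁻¹ * (φ x - ε * φ (u * x)))
                = φ x - ε * φ (u * x) := by
              rw [← mul_assoc, mul_inv_cancel₀ (by linarith), one_mul]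
            rw [e1, e2]; ring
          obtain hψ₁φ := hext hψ₁mem hψ₂mem hseg
          have := DFunLike.congr_fun hψ₁φ b
          rw [hψ₁app] at this
          field_simp at this
          linarith [this]
    intro a b
    obtain ⟨x, hx, y, hy, rfl⟩ := hgen a
    obtain ⟨z, hz, w, hw, rfl⟩ := hgen b
    have hexp : (x - y) * (z - w) = x * z - x * w - y * z + y * w := by ring
    rw [hexp, map_add, map_sub, map_sub, map_sub, map_sub,
      hmulK x hx z hz, hmulK x hx w hw, hmulK y hy z hz, hmulK y hy w hw]
    ring
  · -- multiplicative → extreme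
    intro hmul
    refine ⟨⟨hφK, hφ1⟩, ?_⟩
    rintro ψ₁ ⟨hψ₁K, hψ₁1⟩ ψ₂ ⟨hψ₂K, hψ₂1⟩ ⟨a, b, ha, hb, hab, hcomb⟩
    have happ : ∀ x : B, a * ψ₁ x + b * ψ₂ x = φ x := by
      intro x
      have := DFunLike.congr_fun hcomb x
      simpa [smul_eq_mul] using this
    have hd1 : ∀ x ∈ K, ψ₁ x ≤ a⁻¹ * φ x := by
      intro x hx
      have h := happ x
      have h2 : 0 ≤ b * ψ₂ x := mul_nonneg hb.le (hψ₂K x hx)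
      rw [inv_eq_one_div, mul_comm, ← div_eq_mul_one_div, le_div_iff₀ ha]
      nlinarith
    have hd2 : ∀ x ∈ K, ψ₂ x ≤ b⁻¹ * φ x := by
      intro x hx
      have h := happ x
      have h2 : 0 ≤ a * ψ₁ x := mul_nonneg ha.le (hψ₁K x hx)
      rw [inv_eq_one_div, mul_comm, ← div_eq_mul_one_div, le_div_iff₀ hb]
      nlinarith
    exact VK.dominated_eq K hKsmul hKadd hKmul hone hgen harch φ ψ₁ hφ1 hmul
        hψ₁K hψ₁1 a⁻¹ (by positivity) hd1
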